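/- For every infinite set A and natural number n ≥ 1, there is an injection from A^n into S_{n+1}(A), the set of permutations of A moving exactly n + 1 points. -/
import Mathlib


/-- `S_k(A)`: the set of permutations of `A` moving exactly `k` points. -/
def permsMovingExactly (A : Type*) (k : ℕ) : Set (Equiv.Perm A) :=
  {s | {a | s a ≠ a}.Finite ∧ {a | s a ≠ a}.ncard = k}

/-- For every infinite set `A` and `n ≥ 1`, there is an injection from `A^n` into
`S_{n+1}(A)`. -/
theorem stmt_11 (A : Type*) [Infinite A] (n : ℕ) (hn : 1 ≤ n) :
    ∃ f : (Fin n → A) → permsMovingExactly A (n + 1), Function.Injective f := by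
  classical
  -- Step 1: embedding (Fin n → A) ↪ A
  obtain ⟨e⟩ : Nonempty ((Fin n → A) ↪ A) := by
    rw [← Cardinal.le_def]
    have h1 : Cardinal.mk (Fin n → A) = Cardinal.mk A ^ (n : ℕ) := by
      simp [Cardinal.mk_arrow]
    rw [h1, Cardinal.power_nat_eq (Cardinal.aleph0_le_mk A) hn]
  -- Step 2: equiv A × Fin (n+1) ≃ A
  obtain ⟨φ⟩ : Nonempty (A × Fin (n + 1) ≃ A) := by
    rw [← Cardinal.eq]
    simp only [Cardinal.mk_prod, Cardinal.mk_fin, Cardinal.lift_id, Cardinal.lift_uzero,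
      Cardinal.lift_natCast]
    exact Cardinal.mul_eq_left (Cardinal.aleph0_le_mk A)
      ((Cardinal.nat_lt_aleph0 _).le.trans (Cardinal.aleph0_le_mk A))
      (Nat.cast_ne_zero.mpr (Nat.succ_ne_zero n))
  -- the basic permutation on A × Fin (n+1) rotating the fiber over a
  set σ : A → Equiv.Perm (A × Fin (n + 1)) := fun a =>
    Equiv.prodShear (Equiv.refl A)
      (fun b => if b = a then finRotate (n + 1) else Equiv.refl _) with hσ
  have hrot : ∀ i : Fin (n + 1), finRotate (n + 1) i ≠ i := by
    intro i
    refine Equiv.Perm.mem_support.mp ?_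
    rw [support_finRotate_of_le (by omega)]
    exact Finset.mem_univ i
  have hσapp : ∀ a x, σ a x = (x.1, if x.1 = a then finRotate (n + 1) x.2 else x.2) := by
    intro a x
    simp [hσ, Equiv.prodShear]
    split <;> simp
  have hmoved : ∀ a, {x | σ a x ≠ x} = {a} ×ˢ (Set.univ : Set (Fin (n + 1))) := by
    intro a
    ext ⟨b, i⟩
    simp only [Set.mem_setOf_eq, hσapp, Set.mem_prod,
      Set.mem_singleton_iff, Set.mem_univ, and_true, ne_eq, Prod.mk.injEq]
    by_cases hb : b = a
    · simp [hb, hrot i]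
      omega
    · simp [hb, Ne.symm hb]
  -- final permutation
  set τ : A → Equiv.Perm A := fun a => φ.permCongr (σ a) with hτ
  have hτmoved : ∀ a, {x | τ a x ≠ x} = φ '' {x | σ a x ≠ x} := by
    intro a
    ext x
    simp only [Set.mem_setOf_eq, hτ, Equiv.permCongr_apply]
    constructor
    · intro h
      exact ⟨φ.symm x, fun hc => h (by rw [hc]; simp), by simp⟩
    · rintro ⟨y, hy, rfl⟩
      simpa using fun hc => hy (φ.injective (by simpa using hc))
  have hcard : ∀ a, {x | σ a x ≠ x}.Finite ∧ {x | σ a x ≠ x}.ncard = n + 1 := by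
    intro a
    rw [hmoved a]
    constructor
    · exact (Set.finite_singleton a).prod (Set.finite_univ)
    · rw [show ({a} ×ˢ (Set.univ : Set (Fin (n+1)))) = (fun i => (a, i)) '' Set.univ by
        ext ⟨b, i⟩; simp [eq_comm]]
      rw [Set.ncard_image_of_injective _ (fun i j hij => (Prod.mk.injEq .. ).mp hij |>.2)]
      simp [Set.ncard_univ]
  refine ⟨fun v => ⟨τ (e v), ?_, ?_⟩, ?_⟩
  · rw [hτmoved]
    exact ((hcard _).1.image φ)
  · rw [hτmoved, Set.ncard_image_of_injective _ φ.injective]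
    exact (hcard _).2
  · intro v w h
    have h2 : τ (e v) = τ (e w) := congrArg Subtype.val h
    have h3 : σ (e v) = σ (e w) := φ.permCongr.injective h2
    apply e.injective
    by_contra hne
    have h4 : σ (e v) (e v, 0) = σ (e w) (e v, 0) := by rw [h3]
    rw [hσapp, hσapp, if_pos rfl, if_neg hne] at h4
    exact hrot 0 (by simpa using h4)
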